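/- Minkowski decomposition of lattice points: let λ be a marking with λ_a = 0 for some a and define ω_b = min(λ_b, 1). Then the set of lattice points S_C(λ) of the marked chain polytope equals the Minkowski sum S_C(λ − ω) + S_C(ω). -/

import Mathlib

open Pointwise

variable {α : Type*}

/-- A chain `a ≺ x₁ ≺ … ≺ xₙ ≺ b` with `a, b ∈ A`, all `xᵢ ∉ A`, `n ≥ 1`. -/
def MChain [PartialOrder α] (A : Set α) (a b : α) (l : List α) : Prop :=
  a ∈ A ∧ b ∈ A ∧ l ≠ [] ∧ (∀ x ∈ l, x ∉ A) ∧ List.Chain' (· < ·) (a :: (l ++ [b]))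

/-- The marked chain polytope, realized as the subset of `α → ℝ` of functions vanishing
on the marked set `A` (i.e. `ℝ^{P∖A}`). -/
def markedChainPolytope [PartialOrder α] (A : Set α) (lam : α → ℤ) : Set (α → ℝ) :=
  { s | (∀ x ∈ A, s x = 0) ∧ (∀ x, x ∉ A → 0 ≤ s x) ∧
    ∀ a b l, MChain A a b l → (l.map s).sum ≤ (lam b : ℝ) - (lam a : ℝ) }

/-- The marked order polytope, realized as the subset of `α → ℝ` of functions agreeing
with the marking on `A` (i.e. `ℝ^{P∖A}`). -/
def markedOrderPolytope [PartialOrder α] (A : Set α) (lam : α → ℤ) : Set (α → ℝ) :=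
  { s | (∀ x ∈ A, s x = (lam x : ℝ)) ∧
    (∀ x y, x ∉ A → y ∉ A → x < y → s x ≤ s y) ∧
    (∀ a ∈ A, ∀ x, x ∉ A → a < x → (lam a : ℝ) ≤ s x) ∧
    (∀ b ∈ A, ∀ x, x ∉ A → x < b → s x ≤ (lam b : ℝ)) }

/-- `λ ∈ Q_A`: a nonnegative integer marking, weakly increasing along `≺` on `A`. -/
def IsMarking [PartialOrder α] (A : Set α) (lam : α → ℤ) : Prop :=
  (∀ a ∈ A, 0 ≤ lam a) ∧ ∀ a ∈ A, ∀ b ∈ A, a < b → lam a ≤ lam b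

/-- `A` contains all minimal and all maximal elements of the poset. -/
def ContainsExtremals [PartialOrder α] (A : Set α) : Prop :=
  (∀ x : α, IsMin x → x ∈ A) ∧ (∀ x : α, IsMax x → x ∈ A)

/-- `S_C(λ)`: the lattice points of the marked chain polytope. -/
def markedChainLattice [PartialOrder α] (A : Set α) (lam : α → ℤ) : Set (α → ℝ) :=
  { s ∈ markedChainPolytope A lam | ∀ x, ∃ n : ℤ, s x = (n : ℝ) }

/-- The reduced poset of `(P, A, λ)`. -/
def reducedPoset [PartialOrder α] (A : Set α) (lam : α → ℤ) : Set α :=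
  { x | ¬ ∃ a ∈ A, lam a = 0 ∧ x ≤ a }

/-- Cover relation within the full subposet `R`. -/
def CoversIn [PartialOrder α] (R : Set α) (x y : α) : Prop :=
  x ∈ R ∧ y ∈ R ∧ x < y ∧ ¬ ∃ z ∈ R, x < z ∧ z < y

/-- The Hasse diagram of the subposet `R` is connected. -/
def HasseConnected [PartialOrder α] (R : Set α) : Prop :=
  ∀ x ∈ R, ∀ y ∈ R,
    Relation.ReflTransGen (fun u v => CoversIn R u v ∨ CoversIn R v u) x y

/-- `λ` is `C`-indecomposable. -/
def CIndecomposable [PartialOrder α] (A : Set α) (lam : α → ℤ) : Prop :=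
  ∀ mu tau : α → ℤ, IsMarking A mu → IsMarking A tau →
    markedChainLattice A lam = markedChainLattice A mu + markedChainLattice A tau →
    (∀ a ∈ A, mu a = 0) ∨ (∀ a ∈ A, tau a = 0)

section ListAux

variable {α : Type*}

lemma lsum_map_add (f g : α → ℝ) (l : List α) :
    (l.map (fun x => f x + g x)).sum = (l.map f).sum + (l.map g).sum := by
  induction l with
  | nil => simp
  | cons a l ih => simp only [List.map_cons, List.sum_cons, ih]; ring

lemma lsum_map_sub (f g : α → ℝ) (l : List α) :
    (l.map (fun x => f x - g x)).sum = (l.map f).sum - (l.map g).sum := by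
  induction l with
  | nil => simp
  | cons a l ih => simp only [List.map_cons, List.sum_cons, ih]; ring

lemma lsum_nonneg {f : α → ℝ} {l : List α} (h : ∀ x ∈ l, 0 ≤ f x) :
    0 ≤ (l.map f).sum := by
  apply List.sum_nonneg
  intro x hx
  obtain ⟨y, hy, rfl⟩ := List.mem_map.1 hx
  exact h y hy

lemma lsum_int {f : α → ℝ} (hf : ∀ x, ∃ n : ℤ, f x = n) (l : List α) :
    ∃ n : ℤ, (l.map f).sum = n := by
  induction l with
  | nil => exact ⟨0, by simp⟩
  | cons a l ih =>
    obtain ⟨n, hn⟩ := ih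
    obtain ⟨m, hm⟩ := hf a
    exact ⟨m + n, by simp [hn, hm]⟩

lemma lsum_single_le {f : α → ℝ} {l : List α} (h : ∀ x ∈ l, 0 ≤ f x) {x : α} (hx : x ∈ l) :
    f x ≤ (l.map f).sum := by
  obtain ⟨p, q, rfl⟩ := List.append_of_mem hx
  rw [List.map_append, List.sum_append, List.map_cons, List.sum_cons]
  have h1 : 0 ≤ (p.map f).sum := lsum_nonneg fun y hy => h y (by simp [hy])
  have h2 : 0 ≤ (q.map f).sum := lsum_nonneg fun y hy => h y (by simp [hy])
  linarith

lemma lsum_eq_zero {f : α → ℝ} {l : List α} (h : ∀ x ∈ l, f x = 0) :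
    (l.map f).sum = 0 :=
  List.sum_eq_zero fun x hx => by
    obtain ⟨y, hy, rfl⟩ := List.mem_map.1 hx; exact h y hy

lemma first_nonzero (f : α → ℝ) (l : List α) :
    (∀ x ∈ l, f x = 0) ∨ ∃ p x q, l = p ++ x :: q ∧ (∀ y ∈ p, f y = 0) ∧ f x ≠ 0 := by
  induction l with
  | nil => exact Or.inl (by simp)
  | cons a l ih =>
    by_cases ha : f a = 0
    · rcases ih with h | ⟨p, x, q, rfl, hp, hx⟩
      · left
        intro x hx
        rcases List.mem_cons.1 hx with rfl | h'
        · exact ha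
        · exact h x h'
      · right
        refine ⟨a :: p, x, q, rfl, ?_, hx⟩
        intro y hy
        rcases List.mem_cons.1 hy with rfl | h'
        · exact ha
        · exact hp y h'
    · exact Or.inr ⟨[], a, l, rfl, by simp, ha⟩

end ListAux
theorem stmt9 [Fintype α] [PartialOrder α] (A : Set α) (lam : α → ℤ)
    (hA : ContainsExtremals A) (hlam : IsMarking A lam) (h0 : ∃ a ∈ A, lam a = 0) :
    markedChainLattice A lam
      = markedChainLattice A (fun x => lam x - min (lam x) 1)
        + markedChainLattice A (fun x => min (lam x) 1) := by
  classical
  ext s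
  simp only [Set.mem_add, markedChainLattice, markedChainPolytope, Set.mem_setOf_eq]
  constructor
  · rintro ⟨⟨hs0, hsn, hsc⟩, hsi⟩
    -- the set of points where we subtract 1
    set U : Set α := {x | x ∉ A ∧ 1 ≤ s x ∧ ∀ (a : α) (p : List α), a ∈ A → (∀ z ∈ p, z ∉ A) →
        List.Chain' (· < ·) (a :: (p ++ [x])) → (lam a : ℝ) + (p.map s).sum ≤ 0} with hUdef
    set u : α → ℝ := fun x => if x ∈ U then 1 else 0 with hudef
    have hu0 : ∀ x, x ∉ U → u x = 0 := fun x hx => by simp [hudef, hx]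
    have hu1 : ∀ x, x ∈ U → u x = 1 := fun x hx => by simp [hudef, hx]
    have hun : ∀ x, 0 ≤ u x := fun x => by
      by_cases hx : x ∈ U <;> simp [hudef, hx]
    have hule : ∀ x, u x ≤ 1 := fun x => by
      by_cases hx : x ∈ U <;> simp [hudef, hx]
    have huA : ∀ x ∈ A, u x = 0 := fun x hx => hu0 x (fun hxU => hxU.1 hx)
    have husle : ∀ x, x ∉ A → u x ≤ s x := by
      intro x hx
      by_cases hxU : x ∈ U
      · rw [hu1 x hxU]; exact hxU.2.1
      · rw [hu0 x hxU]; exact hsn x hx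
    -- key structural lemma about U along marked chains
    have key : ∀ a b p x q, MChain A a b (p ++ x :: q) → x ∈ U →
        lam a = 0 ∧ (∀ y ∈ p, s y = 0) ∧ (∀ z ∈ q, z ∉ U) := by
      intro a b p x q hch hxU
      obtain ⟨haA, hbA, -, hnA, hchain⟩ := hch
      have hsplit : List.Chain' (· < ·) ((a :: p) ++ x :: (q ++ [b])) := by
        simpa using hchain
      rw [List.Chain', List.isChain_split] at hsplit
      obtain ⟨hc1, hc2⟩ := hsplit
      have hineq := hxU.2.2 a p haA (fun z hz => hnA z (by simp [hz])) (by simpa [List.Chain'] using hc1)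
      have hpn : ∀ y ∈ p, 0 ≤ s y := fun y hy => hsn y (hnA y (by simp [hy]))
      have hla : (0:ℝ) ≤ (lam a : ℝ) := by exact_mod_cast hlam.1 a haA
      have hsum_nn : 0 ≤ (p.map s).sum := lsum_nonneg hpn
      have hsum0 : (p.map s).sum = 0 := le_antisymm (by linarith) hsum_nn
      refine ⟨?_, ?_, ?_⟩
      · have : (lam a : ℝ) = 0 := le_antisymm (by linarith) hla
        exact_mod_cast this
      · intro y hy
        have h1 : s y ≤ (p.map s).sum := lsum_single_le hpn hy
        have h2 : 0 ≤ s y := hpn y hy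
        linarith [hsum0]
      · intro z hz hzU
        obtain ⟨q1, q2, rfl⟩ := List.append_of_mem hz
        have hchain2 : List.Chain' (· < ·) ((a :: (p ++ x :: q1)) ++ z :: (q2 ++ [b])) := by
          simpa using hchain
        rw [List.Chain', List.isChain_split] at hchain2
        have hmem : ∀ w ∈ p ++ x :: q1, w ∉ A := by
          intro w hw
          apply hnA
          simp only [List.mem_append, List.mem_cons] at hw ⊢
          tauto
        have hineq2 := hzU.2.2 a (p ++ x :: q1) haA hmem (by simpa [List.Chain'] using hchain2.1)
        have hx1 : (1:ℝ) ≤ s x := hxU.2.1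
        have hxmem : x ∈ p ++ x :: q1 := by simp
        have hge : s x ≤ ((p ++ x :: q1).map s).sum :=
          lsum_single_le (fun w hw => hsn w (hmem w hw)) hxmem
        linarith
    -- structure of a marked chain w.r.t. U
    have hUchain : ∀ a b l, MChain A a b l →
        ((∀ x ∈ l, x ∉ U) ∧ (l.map u).sum = 0) ∨
        ((l.map u).sum = 1 ∧ lam a = 0 ∧ 1 ≤ lam b) := by
      intro a b l hch
      by_cases hex : ∃ x ∈ l, x ∈ U
      · obtain ⟨x, hxl, hxU⟩ := hex
        obtain ⟨p, q, rfl⟩ := List.append_of_mem hxl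
        obtain ⟨hla, hp0, hqU⟩ := key a b p x q hch hxU
        right
        have hpU : ∀ y ∈ p, y ∉ U := by
          intro y hy hyU
          have h1 := hp0 y hy
          have h2 := hyU.2.1
          linarith
        refine ⟨?_, hla, ?_⟩
        · rw [List.map_append, List.sum_append, List.map_cons, List.sum_cons,
            lsum_eq_zero (fun y hy => hu0 y (hpU y hy)),
            lsum_eq_zero (fun z hz => hu0 z (hqU z hz)), hu1 x hxU]
          ring
        · have h1 := hsc a b _ hch
          have h2 : s x ≤ ((p ++ x :: q).map s).sum :=
            lsum_single_le (fun y hy => hsn y (hch.2.2.2.1 y hy)) (by simp)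
          have h3 : (1:ℝ) ≤ s x := hxU.2.1
          have h4 : (lam a : ℝ) = 0 := by exact_mod_cast hla
          have : (1:ℝ) ≤ (lam b : ℝ) := by linarith
          exact_mod_cast this
      · push_neg at hex
        exact Or.inl ⟨hex, lsum_eq_zero fun x hx => hu0 x (hex x hx)⟩
    -- lam a ≤ lam b along chains
    have hmono : ∀ a b l, MChain A a b l → lam a ≤ lam b := by
      intro a b l hch
      have h1 := hsc a b l hch
      have h2 : 0 ≤ (l.map s).sum := lsum_nonneg fun x hx => hsn x (hch.2.2.2.1 x hx)
      have : (lam a : ℝ) ≤ (lam b : ℝ) := by linarith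
      exact_mod_cast this
    refine ⟨fun x => s x - u x, ⟨⟨?_, ?_, ?_⟩, ?_⟩, u, ⟨⟨huA, fun x _ => hun x, ?_⟩, ?_⟩, ?_⟩
    · intro x hx
      show s x - u x = 0
      rw [hs0 x hx, huA x hx]; ring
    · intro x hx
      show 0 ≤ s x - u x
      have := husle x hx
      linarith
    · -- chain condition for s - u w.r.t. lam - min lam 1
      intro a b l hch
      show (l.map fun x => s x - u x).sum ≤
        ((lam b - min (lam b) 1 : ℤ) : ℝ) - ((lam a - min (lam a) 1 : ℤ) : ℝ)
      rw [lsum_map_sub]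
      have hsl := hsc a b l hch
      rcases hUchain a b l hch with ⟨hnoU, hsum0⟩ | ⟨hsum1, hla0, hlb1⟩
      · rw [hsum0]
        have hab : lam a ≤ lam b := hmono a b l hch
        have ha0 : 0 ≤ lam a := hlam.1 a hch.1
        by_cases h1a : 1 ≤ lam a
        · have e1 : min (lam a) 1 = 1 := by omega
          have e2 : min (lam b) 1 = 1 := by omega
          rw [e1, e2]; push_cast; linarith
        · have ha : lam a = 0 := by omega
          have e1 : min (lam a) 1 = 0 := by omega
          rw [e1]
          by_cases h1b : 1 ≤ lam b
          · have e2 : min (lam b) 1 = 1 := by omega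
            rw [e2]
            push_cast
            have haR : (lam a : ℝ) = 0 := by exact_mod_cast ha
            rcases first_nonzero s l with hall | ⟨p, x, q, rfl, hp0, hx0⟩
            · rw [lsum_eq_zero hall]
              have : (1:ℝ) ≤ (lam b : ℝ) := by exact_mod_cast h1b
              linarith
            · have hxA : x ∉ A := hch.2.2.2.1 x (by simp)
              have hx1 : (1:ℝ) ≤ s x := by
                obtain ⟨n, hn⟩ := hsi x
                have hnn : (0:ℝ) ≤ (n:ℝ) := by rw [← hn]; exact hsn x hxA
                have hne : (n:ℝ) ≠ 0 := by rw [← hn]; exact hx0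
                have : 1 ≤ n := by
                  have h1 : 0 ≤ n := by exact_mod_cast hnn
                  have h2 : n ≠ 0 := by exact_mod_cast hne
                  omega
                rw [hn]; exact_mod_cast this
              have hxU : x ∉ U := hnoU x (by simp)
              have hnot : ¬ (∀ (a' : α) (p' : List α), a' ∈ A → (∀ z ∈ p', z ∉ A) →
                  List.Chain' (· < ·) (a' :: (p' ++ [x])) → (lam a' : ℝ) + (p'.map s).sum ≤ 0) :=
                fun hall => hxU ⟨hxA, hx1, hall⟩
              push_neg at hnot
              obtain ⟨a', p', ha'A, hp'A, hch', hpos⟩ := hnot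
              obtain ⟨m, hm⟩ := lsum_int hsi p'
              have hint : 1 ≤ lam a' + m := by
                have : (0:ℝ) < (lam a' : ℝ) + (m:ℝ) := by rw [← hm]; exact hpos
                have : (0:ℤ) < lam a' + m := by exact_mod_cast this
                omega
              -- spliced chain
              have hc2 : List.Chain' (· < ·) (x :: (q ++ [b])) := by
                have horig := hch.2.2.2.2
                have h' : List.Chain' (· < ·) ((a :: p) ++ x :: (q ++ [b])) := by
                  simpa using horig
                rw [List.Chain', List.isChain_split] at h'
                exact h'.2
              have hspl : MChain A a' b (p' ++ x :: q) := by
                refine ⟨ha'A, hch.2.1, by simp, ?_, ?_⟩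
                · intro z hz
                  simp only [List.mem_append, List.mem_cons] at hz
                  rcases hz with hz | rfl | hz
                  · exact hp'A z hz
                  · exact hxA
                  · exact hch.2.2.2.1 z (by simp [hz])
                · have : List.Chain' (· < ·) ((a' :: p') ++ x :: (q ++ [b])) := by
                    rw [List.Chain', List.isChain_split]
                    exact ⟨by simpa [List.Chain'] using hch', hc2⟩
                  simpa using this
              have hsl' := hsc a' b _ hspl
              rw [List.map_append, List.sum_append, List.map_cons, List.sum_cons] at hsl'
              have hpz : (p.map s).sum = 0 := lsum_eq_zero hp0
              rw [List.map_append, List.sum_append, List.map_cons, List.sum_cons, hpz]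
              have hintR : (1:ℝ) ≤ (lam a' : ℝ) + (m:ℝ) := by exact_mod_cast hint
              rw [hm] at hsl'
              linarith
          · have hb : lam b = 0 := by omega
            have e2 : min (lam b) 1 = 0 := by omega
            rw [e2]
            push_cast
            have haR : (lam a : ℝ) = 0 := by exact_mod_cast ha
            have hbR : (lam b : ℝ) = 0 := by exact_mod_cast hb
            linarith
      · have e1 : min (lam a) 1 = 0 := by omega
        have e2 : min (lam b) 1 = 1 := by omega
        rw [hsum1, e1, e2]
        push_cast
        have haR : (lam a : ℝ) = 0 := by exact_mod_cast hla0
        linarith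
    · -- integrality of s - u
      intro x
      obtain ⟨n, hn⟩ := hsi x
      by_cases hx : x ∈ U
      · exact ⟨n - 1, by show s x - u x = _; rw [hu1 x hx, hn]; push_cast; ring⟩
      · exact ⟨n, by show s x - u x = _; rw [hu0 x hx, hn]; ring⟩
    · -- chain condition for u w.r.t. min lam 1
      intro a b l hch
      show (l.map u).sum ≤ ((min (lam b) 1 : ℤ) : ℝ) - ((min (lam a) 1 : ℤ) : ℝ)
      rcases hUchain a b l hch with ⟨_, hsum0⟩ | ⟨hsum1, hla0, hlb1⟩
      · rw [hsum0]
        have hab : lam a ≤ lam b := hmono a b l hch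
        have : min (lam a) 1 ≤ min (lam b) 1 := by omega
        have hR : ((min (lam a) 1 : ℤ) : ℝ) ≤ ((min (lam b) 1 : ℤ) : ℝ) := by exact_mod_cast this
        linarith
      · have e1 : min (lam a) 1 = 0 := by omega
        have e2 : min (lam b) 1 = 1 := by omega
        rw [hsum1, e1, e2]
        norm_num
    · -- integrality of u
      intro x
      by_cases hx : x ∈ U
      · exact ⟨1, by rw [hu1 x hx]; norm_num⟩
      · exact ⟨0, by rw [hu0 x hx]; norm_num⟩
    · funext x
      simp only [Pi.add_apply]
      ring
  · rintro ⟨t, ⟨⟨ht0, htn, htc⟩, hti⟩, v, ⟨⟨hv0, hvn, hvc⟩, hvi⟩, rfl⟩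
    refine ⟨⟨?_, ?_, ?_⟩, ?_⟩
    · intro x hx
      simp only [Pi.add_apply, ht0 x hx, hv0 x hx, add_zero]
    · intro x hx
      simp only [Pi.add_apply]
      exact add_nonneg (htn x hx) (hvn x hx)
    · intro a b l hch
      have h1 := htc a b l hch
      have h2 := hvc a b l hch
      have hmap : l.map (t + v) = l.map (fun x => t x + v x) := rfl
      rw [hmap, lsum_map_add]
      push_cast at h1 h2 ⊢
      linarith
    · intro x
      obtain ⟨n, hn⟩ := hti x
      obtain ⟨m, hm⟩ := hvi x
      exact ⟨n + m, by simp only [Pi.add_apply, hn, hm]; push_cast; ring⟩
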